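/- Let B be a blocked plan for an s^m experiment with b blocks of size k over F, let V be a vector subspace of F^m, and let a, b ∈ F^m. Then the E_a-versus-E_b incidence matrix of the expansion V(B) satisfies ñ^{ab}_{α,β} = Σ_{v ∈ V} n^{ab}_{α − a·v, β − b·v} for all α, β ∈ F, where n^{ab} are the incidence numbers of the original plan B. -/

import Mathlib

open Matrix

/-- The `E_a`-versus-`E_c` incidence matrix of a blocked plan:
entry `(α, β)` counts the runs at level `α` of `E_a` and level `β` of `E_c`. -/
def incNN {m k : ℕ} {F : Type*} [Field F] [Fintype F] [DecidableEq F]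
    {J : Type*} [Fintype J] (B : J → Fin k → (Fin m → F)) (a c : Fin m → F) :
    Matrix F F ℕ := fun α β =>
  (Finset.univ.filter (fun ju : J × Fin k =>
    (∑ i, a i * B ju.1 ju.2 i) = α ∧ (∑ i, c i * B ju.1 ju.2 i) = β)).card

/-- The `E_a`-versus-block incidence matrix of a blocked plan:
entry `(α, j)` counts the runs of block `j` at level `α` of `E_a`. -/
def incBlk {m k : ℕ} {F : Type*} [Field F] [Fintype F] [DecidableEq F]
    {J : Type*} [Fintype J] (B : J → Fin k → (Fin m → F)) (a : Fin m → F) :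
    Matrix F J ℕ := fun α j =>
  (Finset.univ.filter (fun u : Fin k => (∑ i, a i * B j u i) = α)).card

/-- The replication vector of the effect `E_a`: `r^a_α` counts the runs
of the whole plan at level `α` of `E_a`. -/
def replV {m k : ℕ} {F : Type*} [Field F] [Fintype F] [DecidableEq F]
    {J : Type*} [Fintype J] (B : J → Fin k → (Fin m → F)) (a : Fin m → F) :
    F → ℕ := fun α =>
  (Finset.univ.filter (fun ju : J × Fin k => (∑ i, a i * B ju.1 ju.2 i) = α)).card

/-- The expansion `V(B)` of a blocked plan `B` along a subspace `V`: its blocks are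
indexed by pairs `(j, v)`, and block `(j, v)` consists of the runs `v + B j u`. -/
def expandPlan {m k : ℕ} {F : Type*} [Field F] {J : Type*}
    (B : J → Fin k → (Fin m → F)) (V : Submodule F (Fin m → F)) :
    (J × V) → Fin k → (Fin m → F) :=
  fun jv u => (jv.2 : Fin m → F) + B jv.1 u

/-- The incidence matrix `Ñ^{ac}` of the expansion `V(B)` satisfies
`ñ^{ac}_{α,β} = Σ_{v ∈ V} n^{ac}_{α − a·v, β − c·v}`. -/
theorem incNN_expandPlan {m k b : ℕ} {F : Type*} [Field F] [Fintype F] [DecidableEq F]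
    (B : Fin b → Fin k → (Fin m → F)) (V : Submodule F (Fin m → F))
    [DecidablePred (· ∈ V)] (a c : Fin m → F) (α β : F) :
    incNN (expandPlan B V) a c α β =
      ∑ v : V, incNN B a c (α - ∑ i, a i * (v : Fin m → F) i)
        (β - ∑ i, c i * (v : Fin m → F) i) := by
  classical
  simp only [incNN, Finset.card_filter]
  simp only [incNN, expandPlan, Finset.card_filter, Fintype.sum_prod_type]
  rw [Finset.sum_comm]
  refine Finset.sum_congr rfl fun v _ => Finset.sum_congr rfl fun j _ =>
    Finset.sum_congr rfl fun u _ => ?_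
  congr 1
  simp only [Pi.add_apply, mul_add, Finset.sum_add_distrib, eq_sub_iff_add_eq, add_comm]
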